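/- With generators {v_m, a_{m,n}} satisfying the q-commutation relations of the Gauss–Lusztig decomposition (a_{m,n}v_m = q²v_m a_{m,n}; a_{m,n}a_{m,n'} = q²a_{m,n'}a_{m,n} for n>n'; a_{m,n}a_{m−1,n'} = q²a_{m−1,n'}a_{m,n} for n ≤ n'; all other pairs commute), the (i, i+j) entry of the matrix Z = T⁺U⁺ equals z_{i,i+j} = v_{i−1} · Σ_{1 ≤ t₁ < t₂ < ... < t_j ≤ i+j−1} a_{i,t₁} a_{i+1,t₂} ⋯ a_{i+j−1,t_j}, with z_{i,i} = 1 and z_{i,i−j} = 0 for j ≥ 1 (and v₀ := 1). -/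

import Mathlib

/-- The `n`-th bidiagonal factor of `U⁺` in the canonical reduced word for
`w₀`: the matrix `I + Σ_{m=n}^{N−1} a_{m,n}E_{m,m+1}` (1-based indices). -/
def GLfactor {R : Type*} [Ring R] (N : ℕ) (a : ℕ → ℕ → R) (n : ℕ) :
    Matrix (Fin N) (Fin N) R :=
  Matrix.of fun i j =>
    if (i : ℕ) + 1 = (j : ℕ) ∧ n ≤ (i : ℕ) + 1 then a ((i : ℕ) + 1) n
    else if i = j then 1 else 0

/-- The matrix `Z = T⁺U⁺` of the Gauss–Lusztig decomposition, with
`T⁺ = diag(1, v₁, …, v_{N−1})` (encoded via `v 0 = 1`) and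
`U⁺` the ordered product of the bidiagonal factors for `n = 1, …, N−1`. -/
def GLmatrix {R : Type*} [Ring R] (N : ℕ) (a : ℕ → ℕ → R) (v : ℕ → R) :
    Matrix (Fin N) (Fin N) R :=
  Matrix.diagonal (fun i : Fin N => v (i : ℕ)) *
    ((List.range (N - 1)).map (fun t => GLfactor N a (t + 1))).prod

/-- Index set: strictly increasing `d`-tuples with `1 ≤ t s ≤ min k (i+s+1)`. -/
def GLidx (i d k : ℕ) : Finset (Fin d → ℕ) :=
  (Fintype.piFinset fun s : Fin d => Finset.Icc 1 (min k (i + (s : ℕ) + 1))).filter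
    fun t => ∀ s s' : Fin d, s < s' → t s < t s'

/-- Partial-product entry sums for the Gauss–Lusztig expansion. -/
def GLS {R : Type*} [Ring R] (a : ℕ → ℕ → R) (i d k : ℕ) : R :=
  ∑ t ∈ GLidx i d k, (List.ofFn fun s : Fin d => a (i + (s : ℕ) + 1) (t s)).prod

lemma GLmem {i d k : ℕ} {t : Fin d → ℕ} :
    t ∈ GLidx i d k ↔
      (∀ s : Fin d, 1 ≤ t s ∧ t s ≤ min k (i + (s : ℕ) + 1)) ∧
        ∀ s s' : Fin d, s < s' → t s < t s' := by
  simp [GLidx, Fintype.mem_piFinset, Finset.mem_Icc]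

lemma GLS_d0 {R : Type*} [Ring R] (a : ℕ → ℕ → R) (i k : ℕ) : GLS a i 0 k = 1 := by
  have h : GLidx i 0 k = Finset.univ := by
    ext t
    simp [GLidx, Fintype.mem_piFinset]
  rw [GLS, h, Finset.univ_unique, Finset.sum_singleton]
  simp

lemma GLS_k0 {R : Type*} [Ring R] (a : ℕ → ℕ → R) (i d : ℕ) : GLS a i (d + 1) 0 = 0 := by
  have h : GLidx i (d + 1) 0 = ∅ := by
    ext t
    simp only [GLmem, Finset.notMem_empty, iff_false, not_and]
    intro h1
    have := h1 0
    omega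
  rw [GLS, h, Finset.sum_empty]

lemma GLchain {d : ℕ} (t : Fin d → ℕ) (h : ∀ s s' : Fin d, s < s' → t s < t s') :
    ∀ n : ℕ, ∀ s s' : Fin d, (s' : ℕ) = (s : ℕ) + n → t s + n ≤ t s' := by
  intro n
  induction n with
  | zero =>
    intro s s' hss
    have : s = s' := Fin.ext (by omega)
    subst this; omega
  | succ n ih =>
    intro s s' hss
    have hlt : (s : ℕ) + n < d := by omega
    have h1 := ih s ⟨(s : ℕ) + n, hlt⟩ rfl
    have h2 := h ⟨(s : ℕ) + n, hlt⟩ s' (by simp [Fin.lt_def]; omega)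
    omega

lemma GLS_rec {R : Type*} [Ring R] (a : ℕ → ℕ → R) (i d k : ℕ) :
    GLS a i (d + 1) (k + 1) =
      GLS a i (d + 1) k +
        (if k + 1 ≤ i + d + 1 then GLS a i d k * a (i + d + 1) (k + 1) else 0) := by
  classical
  set f : (Fin (d + 1) → ℕ) → R :=
    fun t => (List.ofFn fun s : Fin (d + 1) => a (i + (s : ℕ) + 1) (t s)).prod with hf
  have hsplit := Finset.sum_filter_add_sum_filter_not (GLidx i (d + 1) (k + 1))
    (fun t => t (Fin.last d) ≤ k) f
  have hA : (GLidx i (d + 1) (k + 1)).filter (fun t => t (Fin.last d) ≤ k)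
      = GLidx i (d + 1) k := by
    ext t
    simp only [Finset.mem_filter, GLmem]
    constructor
    · rintro ⟨⟨h1, h2⟩, h3⟩
      refine ⟨fun s => ?_, h2⟩
      have hs := h1 s
      rcases lt_or_eq_of_le (Fin.le_last s) with hlt | heq
      · have := h2 s (Fin.last d) hlt
        omega
      · subst heq; omega
    · rintro ⟨h1, h2⟩
      have hl := h1 (Fin.last d)
      exact ⟨⟨fun s => by have := h1 s; omega, h2⟩, by omega⟩
  have hval : ∀ t : Fin d → ℕ,
      f (Fin.snoc t (k + 1)) =
        (List.ofFn fun s : Fin d => a (i + (s : ℕ) + 1) (t s)).prod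
          * a (i + d + 1) (k + 1) := by
    intro t
    show (List.ofFn fun s : Fin (d + 1) =>
        a (i + (s : ℕ) + 1) ((Fin.snoc t (k + 1) : Fin (d + 1) → ℕ) s)).prod = _
    rw [List.ofFn_succ', List.prod_concat]
    simp [Function.comp_def]
  have hsnoc : ∀ (t : Fin d → ℕ) (s : Fin (d + 1)),
      (Fin.snoc t (k + 1) : Fin (d + 1) → ℕ) s =
        if h : (s : ℕ) < d then t ⟨s, h⟩ else k + 1 := by
    intro t s
    by_cases h : (s : ℕ) < d
    · have e : s = Fin.castSucc ⟨s, h⟩ := by ext; rfl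
      conv_lhs => rw [e]
      rw [Fin.snoc_castSucc, dif_pos h]
    · have e : s = Fin.last d := by ext; simp only [Fin.val_last]; omega
      conv_lhs => rw [e]
      rw [Fin.snoc_last, dif_neg h]
  have hB : ∑ t ∈ (GLidx i (d + 1) (k + 1)).filter (fun t => ¬ t (Fin.last d) ≤ k), f t
      = if k + 1 ≤ i + d + 1 then GLS a i d k * a (i + d + 1) (k + 1) else 0 := by
    by_cases hk : k + 1 ≤ i + d + 1
    · rw [if_pos hk, GLS, Finset.sum_mul]
      refine Finset.sum_nbij' (fun t => (Fin.init t : Fin d → ℕ))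
        (fun t => (Fin.snoc t (k + 1) : Fin (d + 1) → ℕ)) ?_ ?_ ?_ ?_ ?_
      · intro t ht
        simp only [Finset.mem_filter, GLmem] at ht
        obtain ⟨⟨h1, h2⟩, h3⟩ := ht
        have hlastle := (h1 (Fin.last d)).2
        simp only [Fin.val_last] at hlastle
        rw [GLmem]
        constructor
        · intro s
          have hs := h1 (Fin.castSucc s)
          have hlt := h2 (Fin.castSucc s) (Fin.last d) (Fin.castSucc_lt_last s)
          simp only [Fin.coe_castSucc] at hs
          show 1 ≤ t (Fin.castSucc s) ∧ t (Fin.castSucc s) ≤ min k (i + (s : ℕ) + 1)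
          omega
        · intro s s' hss
          exact h2 _ _ (Fin.castSucc_lt_castSucc_iff.mpr hss)
      · intro t ht
        rw [GLmem] at ht
        obtain ⟨h1, h2⟩ := ht
        simp only [Finset.mem_filter, GLmem]
        refine ⟨⟨fun s => ?_, fun s s' hss => ?_⟩, ?_⟩
        · rw [hsnoc t s]
          by_cases h : (s : ℕ) < d
          · rw [dif_pos h]
            have := h1 ⟨s, h⟩
            simp only at this
            omega
          · rw [dif_neg h]
            have hd : (s : ℕ) = d := by have := s.isLt; omega
            rw [hd]
            omega
        · rw [hsnoc t s, hsnoc t s']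
          by_cases h : (s : ℕ) < d
          · rw [dif_pos h]
            by_cases h' : (s' : ℕ) < d
            · rw [dif_pos h']
              exact h2 _ _ (by simp only [Fin.mk_lt_mk]; exact hss)
            · rw [dif_neg h']
              have := (h1 ⟨s, h⟩).2
              simp only at this
              omega
          · exfalso
            have hs' := s'.isLt
            rw [Fin.lt_def] at hss
            omega
        · rw [hsnoc t (Fin.last d)]
          simp
      · intro t ht
        simp only [Finset.mem_filter, GLmem] at ht
        obtain ⟨⟨h1, h2⟩, h3⟩ := ht
        have hlast : t (Fin.last d) = k + 1 := by
          have := (h1 (Fin.last d)).2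
          omega
        show Fin.snoc (Fin.init t) (k + 1) = t
        have := Fin.snoc_init_self t
        rwa [hlast] at this
      · intro t _
        show Fin.init (Fin.snoc t (k + 1) : Fin (d + 1) → ℕ) = t
        simp
      · intro t ht
        simp only [Finset.mem_filter, GLmem] at ht
        obtain ⟨⟨h1, h2⟩, h3⟩ := ht
        have hlast : t (Fin.last d) = k + 1 := by
          have := (h1 (Fin.last d)).2
          omega
        have h5 := hval (Fin.init t)
        have h6 : (Fin.snoc (Fin.init t) (k + 1) : Fin (d + 1) → ℕ) = t := by
          have := Fin.snoc_init_self t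
          rwa [hlast] at this
        rw [h6] at h5
        exact h5
    · rw [if_neg hk]
      apply Finset.sum_eq_zero
      intro t ht
      exfalso
      simp only [Finset.mem_filter, GLmem] at ht
      have := (ht.1.1 (Fin.last d)).2
      simp only [Fin.val_last] at this
      omega
  have hstart : GLS a i (d + 1) (k + 1) = ∑ t ∈ GLidx i (d + 1) (k + 1), f t := rfl
  rw [hstart, ← hsplit, hA, hB]
  rfl

lemma GLprod_apply {R : Type*} [Ring R] (N : ℕ) (a : ℕ → ℕ → R) :
    ∀ k, ∀ i j : Fin N,
      (((List.range k).map fun n => GLfactor N a (n + 1)).prod) i j =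
        if (i : ℕ) ≤ (j : ℕ) then GLS a (i : ℕ) ((j : ℕ) - (i : ℕ)) k else 0 := by
  intro k
  induction k with
  | zero =>
    intro i j
    rw [List.range_zero, List.map_nil, List.prod_nil, Matrix.one_apply]
    by_cases h : (i : ℕ) ≤ (j : ℕ)
    · rw [if_pos h]
      rcases eq_or_lt_of_le h with heq | hlt
      · have : i = j := Fin.ext heq
        rw [if_pos this, heq, Nat.sub_self, GLS_d0]
      · have hne : i ≠ j := fun e => by rw [e] at hlt; omega
        rw [if_neg hne]
        obtain ⟨d', hd'⟩ : ∃ d', (j : ℕ) - (i : ℕ) = d' + 1 := ⟨(j : ℕ) - (i : ℕ) - 1, by omega⟩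
        rw [hd', GLS_k0]
    · have hne : i ≠ j := fun e => h (by rw [e])
      rw [if_neg hne, if_neg h]
  | succ k ih =>
    intro i j
    rw [List.range_succ, List.map_append, List.prod_append, List.map_singleton,
      List.prod_singleton, Matrix.mul_apply]
    have hF : ∀ l : Fin N, GLfactor N a (k + 1) l j =
        (if l = j then (1 : R) else 0) +
          (if (l : ℕ) + 1 = (j : ℕ) ∧ k + 1 ≤ (j : ℕ) then a (j : ℕ) (k + 1) else 0) := by
      intro l
      show (if (l : ℕ) + 1 = (j : ℕ) ∧ k + 1 ≤ (l : ℕ) + 1 then a ((l : ℕ) + 1) (k + 1)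
        else if l = j then 1 else 0) = _
      by_cases hl : (l : ℕ) + 1 = (j : ℕ)
      · have hlj : l ≠ j := fun e => by rw [e] at hl; omega
        by_cases hk : k + 1 ≤ (j : ℕ)
        · rw [if_pos ⟨hl, by omega⟩, if_neg hlj, if_pos ⟨hl, hk⟩, hl, zero_add]
        · rw [if_neg (show ¬((l : ℕ) + 1 = (j : ℕ) ∧ k + 1 ≤ (l : ℕ) + 1) from
              fun hc => hk (hl ▸ hc.2)), if_neg hlj,
            if_neg (show ¬((l : ℕ) + 1 = (j : ℕ) ∧ k + 1 ≤ (j : ℕ)) from fun hc => hk hc.2),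
            add_zero]
      · rw [if_neg (show ¬((l : ℕ) + 1 = (j : ℕ) ∧ k + 1 ≤ (l : ℕ) + 1) from
              fun hc => hl hc.1),
            if_neg (show ¬((l : ℕ) + 1 = (j : ℕ) ∧ k + 1 ≤ (j : ℕ)) from fun hc => hl hc.1),
            add_zero]
    simp only [hF]
    have hsum : ∀ l : Fin N,
        (((List.range k).map fun n => GLfactor N a (n + 1)).prod) i l *
          ((if l = j then (1 : R) else 0) +
            (if (l : ℕ) + 1 = (j : ℕ) ∧ k + 1 ≤ (j : ℕ) then a (j : ℕ) (k + 1) else 0)) =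
        (if l = j then (((List.range k).map fun n => GLfactor N a (n + 1)).prod) i l else 0) +
          (if (l : ℕ) + 1 = (j : ℕ) ∧ k + 1 ≤ (j : ℕ) then
            (((List.range k).map fun n => GLfactor N a (n + 1)).prod) i l * a (j : ℕ) (k + 1)
            else 0) := by
      intro l
      rw [mul_add]
      congr 1
      · split <;> simp
      · split <;> simp
    rw [Finset.sum_congr rfl fun l _ => hsum l, Finset.sum_add_distrib,
      Finset.sum_ite_eq' Finset.univ j, if_pos (Finset.mem_univ j)]
    -- second sum
    by_cases hj : 1 ≤ (j : ℕ) ∧ k + 1 ≤ (j : ℕ)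
    · set j' : Fin N := ⟨(j : ℕ) - 1, by have := j.isLt; omega⟩ with hj'
      have hcond : ∀ l : Fin N, ((l : ℕ) + 1 = (j : ℕ) ∧ k + 1 ≤ (j : ℕ)) ↔ l = j' := by
        intro l
        constructor
        · rintro ⟨h1, _⟩
          ext
          simp only [hj']
          omega
        · rintro rfl
          exact ⟨by simp only [hj']; omega, hj.2⟩
      rw [Finset.sum_congr rfl fun l _ => by rw [if_congr (hcond l) rfl rfl],
        Finset.sum_ite_eq' Finset.univ j', if_pos (Finset.mem_univ j')]
      rw [ih i j, ih i j']
      have hjv : (j' : ℕ) = (j : ℕ) - 1 := rfl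
      by_cases hij : (i : ℕ) ≤ (j : ℕ)
      · rw [if_pos hij]
        rcases eq_or_lt_of_le hij with heq | hlt
        ·
          have hneg : ¬ (i : ℕ) ≤ (j' : ℕ) := by rw [hjv]; omega
          rw [if_neg hneg, zero_mul, add_zero, ← heq, Nat.sub_self, GLS_d0, GLS_d0,
            if_pos (le_refl (i : ℕ))]
        · have hpos : (i : ℕ) ≤ (j' : ℕ) := by rw [hjv]; omega
          rw [if_pos hpos]
          obtain ⟨d', hd'⟩ : ∃ d', (j : ℕ) - (i : ℕ) = d' + 1 := ⟨(j : ℕ) - (i : ℕ) - 1, by omega⟩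
          have hd2 : (j' : ℕ) - (i : ℕ) = d' := by rw [hjv]; omega
          have hji : (j : ℕ) = (i : ℕ) + d' + 1 := by omega
          rw [hd', hd2, GLS_rec a (i : ℕ) d' k,
            if_pos (show k + 1 ≤ (i : ℕ) + d' + 1 by omega), hji,
            if_pos (show (i : ℕ) ≤ (i : ℕ) + d' + 1 by omega)]
      · rw [if_neg hij, if_neg (show ¬ (i : ℕ) ≤ (j' : ℕ) by rw [hjv]; omega), zero_mul,
          add_zero, if_neg hij]
    · have hzero : ∀ l ∈ Finset.univ (α := Fin N),
          (if (l : ℕ) + 1 = (j : ℕ) ∧ k + 1 ≤ (j : ℕ) then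
            (((List.range k).map fun n => GLfactor N a (n + 1)).prod) i l * a (j : ℕ) (k + 1)
            else 0) = 0 := by
        intro l _
        rw [if_neg (fun hc => hj ⟨by omega, hc.2⟩)]
      rw [Finset.sum_congr rfl hzero, Finset.sum_const_zero, add_zero, ih i j]
      by_cases hij : (i : ℕ) ≤ (j : ℕ)
      · rw [if_pos hij, if_pos hij]
        rcases eq_or_lt_of_le hij with heq | hlt
        · rw [← heq, Nat.sub_self, GLS_d0, GLS_d0]
        · obtain ⟨d', hd'⟩ : ∃ d', (j : ℕ) - (i : ℕ) = d' + 1 := ⟨(j : ℕ) - (i : ℕ) - 1, by omega⟩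
          rw [hd', GLS_rec a (i : ℕ) d' k,
            if_neg (show ¬ k + 1 ≤ (i : ℕ) + d' + 1 by omega), add_zero]
      · rw [if_neg hij, if_neg hij]

/-- Closed-form expression for the entries of `Z = T⁺U⁺`:
`z_{i,i+j} = v_{i−1} Σ_{1 ≤ t₁ < ⋯ < t_j ≤ i+j−1} a_{i,t₁}a_{i+1,t₂}⋯a_{i+j−1,t_j}`
(with `v₀ = 1`), and `z_{i,i−j} = 0` for `j ≥ 1`. -/
theorem stmt11 {K R : Type*} [Field K] [Ring R] [Algebra K R]
    (q : K) (hq : q ≠ 0) (N : ℕ) (a : ℕ → ℕ → R) (v : ℕ → R)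
    (hv0 : v 0 = 1)
    -- Gauss–Lusztig q-commutation relations
    (hav : ∀ m n, 1 ≤ n → n ≤ m → m ≤ N - 1 →
      a m n * v m = q ^ 2 • (v m * a m n))
    (haa : ∀ m n n', 1 ≤ n' → n' < n → n ≤ m → m ≤ N - 1 →
      a m n * a m n' = q ^ 2 • (a m n' * a m n))
    (hadj : ∀ m n n', 1 ≤ n → n ≤ n' → n ≤ m → m ≤ N - 1 → n' ≤ m - 1 →
      a m n * a (m - 1) n' = q ^ 2 • (a (m - 1) n' * a m n))
    -- all other pairs commute
    (hcom1 : ∀ m n m' n', m' + 2 ≤ m → Commute (a m n) (a m' n'))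
    (hcom2 : ∀ m n n', n' < n → Commute (a m n) (a (m - 1) n'))
    (hcom3 : ∀ m n m', m' ≠ m → Commute (a m n) (v m'))
    (hcom4 : ∀ m m', Commute (v m) (v m')) :
    (∀ i j : ℕ, 1 ≤ i → i + j ≤ N → ∀ (hi : i - 1 < N) (hij : i + j - 1 < N),
      GLmatrix N a v ⟨i - 1, hi⟩ ⟨i + j - 1, hij⟩ =
        v (i - 1) *
          ∑ t ∈ (Fintype.piFinset fun _ : Fin j => Finset.Icc 1 (i + j - 1)) |>.filter
              (fun t => ∀ s s' : Fin j, s < s' → t s < t s'),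
            (List.ofFn fun s : Fin j => a (i + (s : ℕ)) (t s)).prod) ∧
    (∀ i j : ℕ, 1 ≤ j → j < i → i ≤ N →
      ∀ (hi : i - 1 < N) (hij : i - j - 1 < N),
      GLmatrix N a v ⟨i - 1, hi⟩ ⟨i - j - 1, hij⟩ = 0) := by
  have hentry : ∀ (i' j' : Fin N), GLmatrix N a v i' j' =
      v (i' : ℕ) * (if (i' : ℕ) ≤ (j' : ℕ) then
        GLS a (i' : ℕ) ((j' : ℕ) - (i' : ℕ)) (N - 1) else 0) := by
    intro i' j'
    rw [GLmatrix, Matrix.diagonal_mul, GLprod_apply N a (N - 1) i' j']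
  constructor
  · intro i j hi1 hijN hi hij
    rw [hentry]
    simp only
    rw [if_pos (show i - 1 ≤ i + j - 1 by omega)]
    have hd : (i + j - 1) - (i - 1) = j := by omega
    rw [hd]
    congr 1
    rw [GLS]
    apply Finset.sum_congr
    · -- finset equality
      ext t
      rw [GLmem, Finset.mem_filter, Fintype.mem_piFinset]
      constructor
      · rintro ⟨h1, h2⟩
        refine ⟨fun s => ?_, h2⟩
        have hs := h1 s
        have hsl := s.isLt
        rw [Finset.mem_Icc]
        omega
      · rintro ⟨h1, h2⟩
        refine ⟨fun s => ?_, h2⟩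
        have hsl := s.isLt
        have hlast : (j - 1 : ℕ) < j := by omega
        have hchain := GLchain t h2 ((j - 1) - (s : ℕ)) s ⟨j - 1, hlast⟩ (by simp; omega)
        have hsm := h1 s
        have hlm := h1 ⟨j - 1, hlast⟩
        rw [Finset.mem_Icc] at hsm hlm
        omega
    · intro t _
      congr 1
      congr 1
      funext s
      congr 1
      omega
  · intro i j hj1 hji hiN hi hij
    rw [hentry]
    simp only
    rw [if_neg (show ¬ i - 1 ≤ i - j - 1 by omega), mul_zero]
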